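/- Let 1/2 ≤ p_d < 1 and define g : [0,1) × [0,1) → ℝ by g(x,y) = 1 if x⊖y ≤ 1/2 and g(x,y) = 2p_d − 1 if x⊖y > 1/2. Then with respect to Lebesgue measure: (i) ∫₀¹ g(x,y) dy = p_d for every x ∈ [0,1) (and likewise ∫₀¹ g(x,y) dx = p_d for every y); (ii) ∫∫∫_{[0,1)³} g(x,y) g(y,z) dx dy dz = p_d²; (iii) ∫∫∫_{[0,1)³} g(x,y) g(y,z) g(z,x) dx dy dz = p_d³. -/

import Mathlib

open MeasureTheory

/-- Subtraction modulo 1 on `[0,1)`. -/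
noncomputable def ominus (x y : ℝ) : ℝ := if 0 ≤ x - y then x - y else x - y + 1

/-- The direction weight function: `g(x,y) = 1` if `x ⊖ y ≤ 1/2` and `g(x,y) = 2p_d - 1`
otherwise. -/
noncomputable def g (pd : ℝ) (x y : ℝ) : ℝ := if ominus x y ≤ 1 / 2 then 1 else 2 * pd - 1

namespace Stmt17Aux

/-- the one-variable profile of `g` -/
noncomputable def hfun (pd : ℝ) (t : ℝ) : ℝ := if t ≤ 1 / 2 then 1 else 2 * pd - 1

/-- the two-point correlation function -/
noncomputable def Phi (pd w : ℝ) : ℝ := (2 * pd - 1) + (2 - 2 * pd) ^ 2 * min w (1 - w)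

/-- profile for the cyclic triple integral -/
noncomputable def Psi (pd w : ℝ) : ℝ := hfun pd (ominus 0 w) * Phi pd w

lemma g_eq (pd x y : ℝ) : g pd x y = hfun pd (ominus x y) := rfl

lemma ominus_mem {x y : ℝ} (hx : x ∈ Set.Ico (0:ℝ) 1) (hy : y ∈ Set.Ico (0:ℝ) 1) :
    ominus x y ∈ Set.Ico (0:ℝ) 1 := by
  simp only [Set.mem_Ico] at *
  unfold ominus
  split_ifs with h <;> constructor <;> linarith [hx.1, hx.2, hy.1, hy.2]

lemma ominus_self (x : ℝ) : ominus x x = 0 := by unfold ominus; simp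

lemma ominus_ominus {a b c : ℝ} (ha : a ∈ Set.Ico (0:ℝ) 1) (hb : b ∈ Set.Ico (0:ℝ) 1)
    (hc : c ∈ Set.Ico (0:ℝ) 1) :
    ominus (ominus a c) (ominus b c) = ominus a b := by
  simp only [Set.mem_Ico] at *
  obtain ⟨ha0, ha1⟩ := ha; obtain ⟨hb0, hb1⟩ := hb; obtain ⟨hc0, hc1⟩ := hc
  unfold ominus
  split_ifs <;> linarith

lemma measurable_hfun (pd : ℝ) : Measurable (hfun pd) :=
  Measurable.ite (measurableSet_le measurable_id measurable_const) measurable_const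
    measurable_const

lemma measurable_ominus_left (c : ℝ) : Measurable (fun t => ominus t c) := by
  unfold ominus
  exact Measurable.ite (measurableSet_le measurable_const (measurable_id.sub measurable_const))
    (measurable_id.sub measurable_const)
    ((measurable_id.sub measurable_const).add measurable_const)

lemma measurable_ominus_right (c : ℝ) : Measurable (fun t => ominus c t) := by
  unfold ominus
  exact Measurable.ite (measurableSet_le measurable_const (measurable_const.sub measurable_id))
    (measurable_const.sub measurable_id)
    ((measurable_const.sub measurable_id).add measurable_const)

lemma measurable_Psi (pd : ℝ) : Measurable (Psi pd) := by
  unfold Psi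
  apply Measurable.mul
  · exact (measurable_hfun pd).comp (measurable_ominus_right 0)
  · unfold Phi
    exact (continuous_const.add (continuous_const.mul
      (continuous_id.min (continuous_const.sub continuous_id)))).measurable

/-- bounded measurable functions are interval integrable -/
lemma II {f : ℝ → ℝ} (hf : Measurable f) {C : ℝ} {a b : ℝ} (hab : a ≤ b)
    (hC : ∀ t ∈ Set.Ioc a b, |f t| ≤ C) : IntervalIntegrable f volume a b := by
  rw [intervalIntegrable_iff_integrableOn_Ioc_of_le hab]
  apply MeasureTheory.Integrable.mono'
    (integrableOn_const (C := C) measure_Ioc_lt_top.ne)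
    hf.aestronglyMeasurable
  filter_upwards [ae_restrict_mem measurableSet_Ioc] with t ht
  rw [Real.norm_eq_abs]
  exact hC t ht

lemma II01 {f : ℝ → ℝ} (hf : Measurable f) {C : ℝ}
    (hC : ∀ t ∈ Set.Icc (0:ℝ) 1, |f t| ≤ C)
    {a b : ℝ} (h0 : 0 ≤ a) (hab : a ≤ b) (hb1 : b ≤ 1) : IntervalIntegrable f volume a b :=
  II hf hab (fun t ht => hC t ⟨le_trans h0 (le_of_lt ht.1), le_trans ht.2 hb1⟩)

lemma integral_congr_Ioo {f φ : ℝ → ℝ} {a b : ℝ} (hab : a ≤ b)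
    (h : ∀ t ∈ Set.Ioo a b, f t = φ t) :
    ∫ t in a..b, f t = ∫ t in a..b, φ t := by
  apply intervalIntegral.integral_congr_ae
  have hb' : ∀ᵐ t : ℝ, t ≠ b := by
    rw [MeasureTheory.ae_iff]
    simpa [not_not, Set.setOf_eq_eq_singleton] using measure_singleton b
  filter_upwards [hb'] with t ht hmem
  rw [Set.uIoc_of_le hab] at hmem
  exact h t ⟨hmem.1, lt_of_le_of_ne hmem.2 ht⟩

lemma integral_const_Ioo {f : ℝ → ℝ} {a b c : ℝ} (hab : a ≤ b)
    (h : ∀ t ∈ Set.Ioo a b, f t = c) : ∫ t in a..b, f t = (b - a) * c := by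
  rw [integral_congr_Ioo hab h, intervalIntegral.integral_const, smul_eq_mul]

lemma integral_linear (α β a b : ℝ) :
    ∫ w in a..b, (α + β * w) = α * (b - a) + β * (b ^ 2 - a ^ 2) / 2 := by
  have h1 : IntervalIntegrable (fun _ : ℝ => α) volume a b := intervalIntegrable_const
  have h2 : IntervalIntegrable (fun w : ℝ => β * w) volume a b :=
    (continuous_const.mul continuous_id).intervalIntegrable a b
  rw [intervalIntegral.integral_add h1 h2, intervalIntegral.integral_const,
    intervalIntegral.integral_const_mul, integral_id, smul_eq_mul]
  ring

/-- translation invariance of integrals over `[0,1)` -/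
lemma transl {f : ℝ → ℝ} (hf : Measurable f) {C : ℝ}
    (hC : ∀ t ∈ Set.Icc (0:ℝ) 1, |f t| ≤ C) {c : ℝ} (hc : c ∈ Set.Ico (0:ℝ) 1) :
    ∫ t in Set.Ico (0:ℝ) 1, f (ominus t c) = ∫ t in (0:ℝ)..1, f t := by
  obtain ⟨hc0, hc1⟩ := hc
  have hFm : Measurable fun t => f (ominus t c) := hf.comp (measurable_ominus_left c)
  have hFb : ∀ t ∈ Set.Ioc (0:ℝ) 1, |f (ominus t c)| ≤ C := by
    intro t ht
    obtain ⟨ht1, ht2⟩ := ht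
    apply hC
    rw [Set.mem_Icc]
    unfold ominus
    split_ifs with h <;> constructor <;> linarith
  have key : ∫ t in Set.Ico (0:ℝ) 1, f (ominus t c) = ∫ t in (0:ℝ)..1, f (ominus t c) := by
    rw [MeasureTheory.integral_Ico_eq_integral_Ioo,
      intervalIntegral.integral_of_le (by norm_num : (0:ℝ) ≤ 1),
      MeasureTheory.integral_Ioc_eq_integral_Ioo]
  rw [key]
  have h1 : IntervalIntegrable (fun t => f (ominus t c)) volume 0 c :=
    II hFm hc0 (fun t ht => hFb t ⟨ht.1, le_trans ht.2 (le_of_lt hc1)⟩)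
  have h2 : IntervalIntegrable (fun t => f (ominus t c)) volume c 1 :=
    II hFm (le_of_lt hc1) (fun t ht => hFb t ⟨lt_of_le_of_lt hc0 ht.1, ht.2⟩)
  rw [← intervalIntegral.integral_add_adjacent_intervals h1 h2]
  have p1 : ∫ t in (0:ℝ)..c, f (ominus t c) = ∫ t in (1-c:ℝ)..1, f t := by
    have e1 : ∫ t in (0:ℝ)..c, f (ominus t c) = ∫ t in (0:ℝ)..c, f (t - (c - 1)) := by
      apply integral_congr_Ioo hc0
      intro t ht
      obtain ⟨ht1, ht2⟩ := ht
      unfold ominus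
      rw [if_neg (by linarith)]
      congr 1
      ring
    rw [e1, intervalIntegral.integral_comp_sub_right f (c-1)]
    norm_num
  have p2 : ∫ t in c..(1:ℝ), f (ominus t c) = ∫ t in (0:ℝ)..(1-c), f t := by
    have e2 : ∫ t in c..(1:ℝ), f (ominus t c) = ∫ t in c..(1:ℝ), f (t - c) := by
      apply integral_congr_Ioo (le_of_lt hc1)
      intro t ht
      obtain ⟨ht1, ht2⟩ := ht
      unfold ominus
      rw [if_pos (by linarith)]
    rw [e2, intervalIntegral.integral_comp_sub_right f c]
    norm_num
  rw [p1, p2]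
  have hfi1 : IntervalIntegrable f volume 0 (1-c) :=
    II hf (by linarith) (fun t ht => hC t ⟨le_of_lt ht.1, by linarith [ht.2]⟩)
  have hfi2 : IntervalIntegrable f volume (1-c) 1 :=
    II hf (by linarith) (fun t ht => hC t ⟨by linarith [ht.1], ht.2⟩)
  rw [add_comm, intervalIntegral.integral_add_adjacent_intervals hfi1 hfi2]

variable {pd : ℝ}

lemma abs_hfun_le (hpd0 : 1/2 ≤ pd) (hpd1 : pd < 1) (t : ℝ) : |hfun pd t| ≤ 1 := by
  unfold hfun
  split_ifs <;> rw [abs_le] <;> constructor <;> linarith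

lemma integral_hfun (hpd0 : 1/2 ≤ pd) (hpd1 : pd < 1) :
    ∫ t in (0:ℝ)..1, hfun pd t = pd := by
  have hb : ∀ t ∈ Set.Icc (0:ℝ) 1, |hfun pd t| ≤ 1 := fun t _ => abs_hfun_le hpd0 hpd1 t
  have a1 : IntervalIntegrable (hfun pd) volume 0 (1/2) :=
    II01 (measurable_hfun pd) hb le_rfl (by norm_num) (by norm_num)
  have a2 : IntervalIntegrable (hfun pd) volume (1/2) 1 :=
    II01 (measurable_hfun pd) hb (by norm_num) (by norm_num) le_rfl
  rw [← intervalIntegral.integral_add_adjacent_intervals a1 a2,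
    integral_const_Ioo (c := 1) (by norm_num)
      (fun t ht => by unfold hfun; rw [if_pos (le_of_lt ht.2)]),
    integral_const_Ioo (c := 2*pd-1) (by norm_num)
      (fun t ht => by unfold hfun; rw [if_neg (not_le.2 ht.1)])]
  ring

lemma integral_hfun_rev (hpd0 : 1/2 ≤ pd) (hpd1 : pd < 1) :
    ∫ t in (0:ℝ)..1, hfun pd (ominus 0 t) = pd := by
  have hm : Measurable (fun t => hfun pd (ominus 0 t)) :=
    (measurable_hfun pd).comp (measurable_ominus_right 0)
  have hb : ∀ t ∈ Set.Icc (0:ℝ) 1, |hfun pd (ominus 0 t)| ≤ 1 :=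
    fun t _ => abs_hfun_le hpd0 hpd1 _
  have a1 : IntervalIntegrable (fun t => hfun pd (ominus 0 t)) volume 0 (1/2) :=
    II01 hm hb le_rfl (by norm_num) (by norm_num)
  have a2 : IntervalIntegrable (fun t => hfun pd (ominus 0 t)) volume (1/2) 1 :=
    II01 hm hb (by norm_num) (by norm_num) le_rfl
  rw [← intervalIntegral.integral_add_adjacent_intervals a1 a2,
    integral_const_Ioo (c := 2*pd-1) (by norm_num)
      (fun t ht => by
        obtain ⟨h1, h2⟩ := ht
        unfold hfun ominus
        split_ifs <;> first | rfl | linarith),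
    integral_const_Ioo (c := 1) (by norm_num)
      (fun t ht => by
        obtain ⟨h1, h2⟩ := ht
        unfold hfun ominus
        split_ifs <;> first | rfl | linarith)]
  ring

lemma abs_Psi_le (hpd0 : 1/2 ≤ pd) (hpd1 : pd < 1) :
    ∀ t ∈ Set.Icc (0:ℝ) 1, |Psi pd t| ≤ 2 := by
  intro t ht
  obtain ⟨h0, h1⟩ := ht
  unfold Psi
  rw [abs_mul]
  have hm1 : min t (1-t) ≤ t := min_le_left _ _
  have hm0 : 0 ≤ min t (1-t) := le_min h0 (by linarith)
  have hc0 : (0:ℝ) ≤ (2 - 2*pd) ^ 2 := sq_nonneg _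
  have hc1 : (2 - 2*pd) ^ 2 ≤ 1 := by nlinarith
  have hPhi : |Phi pd t| ≤ 2 := by
    unfold Phi
    rw [abs_le]
    constructor
    · nlinarith
    · nlinarith
  calc |hfun pd (ominus 0 t)| * |Phi pd t| ≤ 1 * 2 :=
        mul_le_mul (abs_hfun_le hpd0 hpd1 _) hPhi (abs_nonneg _) (by norm_num)
    _ = 2 := by norm_num

set_option maxHeartbeats 1000000 in
lemma integral_F (hpd0 : 1/2 ≤ pd) (hpd1 : pd < 1) {w : ℝ} (hw : w ∈ Set.Ico (0:ℝ) 1) :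
    ∫ t in (0:ℝ)..1, hfun pd (ominus w t) * hfun pd t = Phi pd w := by
  obtain ⟨hw0, hw1⟩ := hw
  have hFm : Measurable (fun t => hfun pd (ominus w t) * hfun pd t) :=
    ((measurable_hfun pd).comp (measurable_ominus_right w)).mul (measurable_hfun pd)
  have hFb : ∀ t ∈ Set.Icc (0:ℝ) 1, |hfun pd (ominus w t) * hfun pd t| ≤ 1 := by
    intro t _
    rw [abs_mul]
    exact mul_le_one₀ (abs_hfun_le hpd0 hpd1 _) (abs_nonneg _) (abs_hfun_le hpd0 hpd1 _)
  rcases le_or_gt w (1/2) with hle | hgt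
  · have a1 : IntervalIntegrable (fun t => hfun pd (ominus w t) * hfun pd t) volume 0 w :=
      II01 hFm hFb le_rfl hw0 (by linarith)
    have a2 : IntervalIntegrable (fun t => hfun pd (ominus w t) * hfun pd t) volume w (1/2) :=
      II01 hFm hFb hw0 hle (by norm_num)
    have a3 : IntervalIntegrable (fun t => hfun pd (ominus w t) * hfun pd t) volume (1/2) (w+1/2) :=
      II01 hFm hFb (by norm_num) (by linarith) (by linarith)
    have a4 : IntervalIntegrable (fun t => hfun pd (ominus w t) * hfun pd t) volume (w+1/2) 1 :=
      II01 hFm hFb (by linarith) (by linarith) le_rfl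
    rw [← intervalIntegral.integral_add_adjacent_intervals a1 ((a2.trans a3).trans a4),
      ← intervalIntegral.integral_add_adjacent_intervals a2 (a3.trans a4),
      ← intervalIntegral.integral_add_adjacent_intervals a3 a4,
      integral_const_Ioo (c := 1) hw0
        (fun t ht => by
          obtain ⟨h1, h2⟩ := ht
          unfold hfun ominus
          split_ifs <;> first | ring1 | linarith),
      integral_const_Ioo (c := 2*pd-1) hle
        (fun t ht => by
          obtain ⟨h1, h2⟩ := ht
          unfold hfun ominus
          split_ifs <;> first | ring1 | linarith),
      integral_const_Ioo (c := (2*pd-1)*(2*pd-1)) (by linarith)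
        (fun t ht => by
          obtain ⟨h1, h2⟩ := ht
          unfold hfun ominus
          split_ifs <;> first | ring1 | linarith),
      integral_const_Ioo (c := 2*pd-1) (by linarith)
        (fun t ht => by
          obtain ⟨h1, h2⟩ := ht
          unfold hfun ominus
          split_ifs <;> first | ring1 | linarith)]
    unfold Phi
    rw [min_eq_left (by linarith)]
    ring
  · have a1 : IntervalIntegrable (fun t => hfun pd (ominus w t) * hfun pd t) volume 0 (w-1/2) :=
      II01 hFm hFb le_rfl (by linarith) (by linarith)
    have a2 : IntervalIntegrable (fun t => hfun pd (ominus w t) * hfun pd t) volume (w-1/2) (1/2) :=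
      II01 hFm hFb (by linarith) (by linarith) (by norm_num)
    have a3 : IntervalIntegrable (fun t => hfun pd (ominus w t) * hfun pd t) volume (1/2) w :=
      II01 hFm hFb (by norm_num) (by linarith) (by linarith)
    have a4 : IntervalIntegrable (fun t => hfun pd (ominus w t) * hfun pd t) volume w 1 :=
      II01 hFm hFb (by linarith) (by linarith) le_rfl
    rw [← intervalIntegral.integral_add_adjacent_intervals a1 ((a2.trans a3).trans a4),
      ← intervalIntegral.integral_add_adjacent_intervals a2 (a3.trans a4),
      ← intervalIntegral.integral_add_adjacent_intervals a3 a4,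
      integral_const_Ioo (c := 2*pd-1) (by linarith)
        (fun t ht => by
          obtain ⟨h1, h2⟩ := ht
          unfold hfun ominus
          split_ifs <;> first | ring1 | linarith),
      integral_const_Ioo (c := 1) (by linarith)
        (fun t ht => by
          obtain ⟨h1, h2⟩ := ht
          unfold hfun ominus
          split_ifs <;> first | ring1 | linarith),
      integral_const_Ioo (c := 2*pd-1) (by linarith)
        (fun t ht => by
          obtain ⟨h1, h2⟩ := ht
          unfold hfun ominus
          split_ifs <;> first | ring1 | linarith),
      integral_const_Ioo (c := (2*pd-1)*(2*pd-1)) (by linarith)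
        (fun t ht => by
          obtain ⟨h1, h2⟩ := ht
          unfold hfun ominus
          split_ifs <;> first | ring1 | linarith)]
    unfold Phi
    rw [min_eq_right (by linarith)]
    ring

lemma integral_Psi (hpd0 : 1/2 ≤ pd) (hpd1 : pd < 1) :
    ∫ t in (0:ℝ)..1, Psi pd t = pd ^ 3 := by
  have hm := measurable_Psi pd
  have hb := abs_Psi_le hpd0 hpd1
  have a1 : IntervalIntegrable (Psi pd) volume 0 (1/2) :=
    II01 hm hb le_rfl (by norm_num) (by norm_num)
  have a2 : IntervalIntegrable (Psi pd) volume (1/2) 1 :=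
    II01 hm hb (by norm_num) (by norm_num) le_rfl
  rw [← intervalIntegral.integral_add_adjacent_intervals a1 a2]
  have p1 : ∫ t in (0:ℝ)..(1/2), Psi pd t
      = ∫ t in (0:ℝ)..(1/2), ((2*pd-1)*(2*pd-1) + ((2*pd-1)*(2-2*pd)^2) * t) := by
    apply integral_congr_Ioo (by norm_num)
    intro t ht
    obtain ⟨h1, h2⟩ := ht
    unfold Psi Phi hfun ominus
    rw [min_eq_left (by linarith)]
    split_ifs <;> first | ring1 | linarith
  have p2 : ∫ t in (1/2:ℝ)..1, Psi pd t
      = ∫ t in (1/2:ℝ)..1, (((2*pd-1) + (2-2*pd)^2) + (-(2-2*pd)^2) * t) := by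
    apply integral_congr_Ioo (by norm_num)
    intro t ht
    obtain ⟨h1, h2⟩ := ht
    unfold Psi Phi hfun ominus
    rw [min_eq_right (by linarith)]
    split_ifs <;> first | ring1 | linarith
  rw [p1, p2, integral_linear, integral_linear]
  ring

lemma lemK (hpd0 : 1/2 ≤ pd) (hpd1 : pd < 1) {x y : ℝ} (hx : x ∈ Set.Ico (0:ℝ) 1)
    (hy : y ∈ Set.Ico (0:ℝ) 1) :
    ∫ z in Set.Ico (0:ℝ) 1, g pd y z * g pd z x = Phi pd (ominus y x) := by
  have hwmem : ominus y x ∈ Set.Ico (0:ℝ) 1 := ominus_mem hy hx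
  have hcongr : ∀ z ∈ Set.Ico (0:ℝ) 1, g pd y z * g pd z x
      = hfun pd (ominus (ominus y x) (ominus z x)) * hfun pd (ominus z x) := by
    intro z hz
    rw [g_eq, g_eq, ominus_ominus hy hz hx]
  rw [MeasureTheory.setIntegral_congr_fun measurableSet_Ico hcongr]
  have hFm : Measurable (fun u => hfun pd (ominus (ominus y x) u) * hfun pd u) :=
    ((measurable_hfun pd).comp (measurable_ominus_right _)).mul (measurable_hfun pd)
  have hFb : ∀ t ∈ Set.Icc (0:ℝ) 1,
      |hfun pd (ominus (ominus y x) t) * hfun pd t| ≤ 1 := by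
    intro t _
    rw [abs_mul]
    exact mul_le_one₀ (abs_hfun_le hpd0 hpd1 _) (abs_nonneg _) (abs_hfun_le hpd0 hpd1 _)
  exact (transl hFm hFb hx).trans (integral_F hpd0 hpd1 hwmem)

lemma lemPsi (hpd0 : 1/2 ≤ pd) (hpd1 : pd < 1) {x : ℝ} (hx : x ∈ Set.Ico (0:ℝ) 1) :
    ∫ y in Set.Ico (0:ℝ) 1, g pd x y * Phi pd (ominus y x) = pd ^ 3 := by
  have hcongr : ∀ y ∈ Set.Ico (0:ℝ) 1, g pd x y * Phi pd (ominus y x)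
      = Psi pd (ominus y x) := by
    intro y hy
    have h := ominus_ominus hx hy hx
    rw [ominus_self] at h
    rw [g_eq, ← h]
    rfl
  rw [MeasureTheory.setIntegral_congr_fun measurableSet_Ico hcongr]
  exact (transl (measurable_Psi pd) (abs_Psi_le hpd0 hpd1) hx).trans
    (integral_Psi hpd0 hpd1)

end Stmt17Aux

open Stmt17Aux in
/-- Integrals of the direction weight function `g` over `[0,1)` with respect to Lebesgue
measure: the single, double-composition and cyclic triple-composition integrals equal
`p_d`, `p_d²` and `p_d³`, respectively. -/
theorem stmt17 {pd : ℝ} (hpd0 : 1 / 2 ≤ pd) (hpd1 : pd < 1) :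
    (∀ x ∈ Set.Ico (0 : ℝ) 1, (∫ y in Set.Ico (0 : ℝ) 1, g pd x y) = pd) ∧
    (∀ y ∈ Set.Ico (0 : ℝ) 1, (∫ x in Set.Ico (0 : ℝ) 1, g pd x y) = pd) ∧
    (∫ x in Set.Ico (0 : ℝ) 1, ∫ y in Set.Ico (0 : ℝ) 1, ∫ z in Set.Ico (0 : ℝ) 1,
        g pd x y * g pd y z) = pd ^ 2 ∧
    (∫ x in Set.Ico (0 : ℝ) 1, ∫ y in Set.Ico (0 : ℝ) 1, ∫ z in Set.Ico (0 : ℝ) 1,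
        g pd x y * g pd y z * g pd z x) = pd ^ 3 := by
  have part1 : ∀ x ∈ Set.Ico (0 : ℝ) 1, (∫ y in Set.Ico (0 : ℝ) 1, g pd x y) = pd := by
    intro x hx
    have hcongr : ∀ y ∈ Set.Ico (0:ℝ) 1, g pd x y = hfun pd (ominus 0 (ominus y x)) := by
      intro y hy
      have h := ominus_ominus hx hy hx
      rw [ominus_self] at h
      rw [g_eq, ← h]
    rw [MeasureTheory.setIntegral_congr_fun measurableSet_Ico hcongr]
    have hm : Measurable (fun u => hfun pd (ominus 0 u)) :=
      (measurable_hfun pd).comp (measurable_ominus_right 0)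
    have hb : ∀ t ∈ Set.Icc (0:ℝ) 1, |hfun pd (ominus 0 t)| ≤ 1 :=
      fun t _ => abs_hfun_le hpd0 hpd1 _
    exact (transl hm hb hx).trans (integral_hfun_rev hpd0 hpd1)
  have part2 : ∀ y ∈ Set.Ico (0 : ℝ) 1, (∫ x in Set.Ico (0 : ℝ) 1, g pd x y) = pd := by
    intro y hy
    have hb : ∀ t ∈ Set.Icc (0:ℝ) 1, |hfun pd t| ≤ 1 :=
      fun t _ => abs_hfun_le hpd0 hpd1 _
    exact (transl (measurable_hfun pd) hb hy).trans (integral_hfun hpd0 hpd1)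
  refine ⟨part1, part2, ?_, ?_⟩
  · have mid : ∀ x ∈ Set.Ico (0:ℝ) 1,
        (∫ y in Set.Ico (0:ℝ) 1, ∫ z in Set.Ico (0:ℝ) 1, g pd x y * g pd y z) = pd ^ 2 := by
      intro x hx
      have inner : ∀ y ∈ Set.Ico (0:ℝ) 1,
          (∫ z in Set.Ico (0:ℝ) 1, g pd x y * g pd y z) = g pd x y * pd := by
        intro y hy
        rw [MeasureTheory.integral_const_mul, part1 y hy]
      rw [MeasureTheory.setIntegral_congr_fun measurableSet_Ico inner,
        MeasureTheory.integral_mul_const, part1 x hx, sq]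
    rw [MeasureTheory.setIntegral_congr_fun measurableSet_Ico mid,
      MeasureTheory.setIntegral_const]
    simp [Real.volume_Ico]
  · have mid : ∀ x ∈ Set.Ico (0:ℝ) 1,
        (∫ y in Set.Ico (0:ℝ) 1, ∫ z in Set.Ico (0:ℝ) 1,
          g pd x y * g pd y z * g pd z x) = pd ^ 3 := by
      intro x hx
      have inner : ∀ y ∈ Set.Ico (0:ℝ) 1,
          (∫ z in Set.Ico (0:ℝ) 1, g pd x y * g pd y z * g pd z x)
            = g pd x y * Phi pd (ominus y x) := by
        intro y hy
        simp only [mul_assoc]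
        rw [MeasureTheory.integral_const_mul, lemK hpd0 hpd1 hx hy]
      rw [MeasureTheory.setIntegral_congr_fun measurableSet_Ico inner]
      exact lemPsi hpd0 hpd1 hx
    rw [MeasureTheory.setIntegral_congr_fun measurableSet_Ico mid,
      MeasureTheory.setIntegral_const]
    simp [Real.volume_Ico]
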